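/- Let v₊ ≥ v₋, y₊ ≥ y₋, and v'₊ ≥ v'₋ be real numbers and let η ∈ [0,1]. Then the following are equivalent: (i) there exist rotation matrices R_S, R_A ∈ SO(2) such that the real symmetric 2×2 matrix (1−η)·R_S diag(v₊,v₋) R_Sᵀ + η·R_A diag(y₊,y₋) R_Aᵀ has eigenvalues v'₊ and v'₋; (ii) v'₊ + v'₋ = (1−η)(v₊+v₋) + η(y₊+y₋), v'₊ ≤ (1−η)v₊ + η y₊, v'₋ ≤ (1−η)v₊ + η y₋, and v'₋ ≤ (1−η)v₋ + η y₊. -/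

import Mathlib

open Matrix Polynomial

/- ## Auxiliary lemmas -/

lemma charpoly_two' (M : Matrix (Fin 2) (Fin 2) ℝ) :
    M.charpoly = X^2 - C (M 0 0 + M 1 1) * X + C (M 0 0 * M 1 1 - M 0 1 * M 1 0) := by
  rw [Matrix.charpoly, Matrix.det_fin_two]
  simp [charmatrix_apply_eq, charmatrix_apply_ne]
  ring

lemma quad_eq_iff' (t d a b : ℝ) :
    (X^2 - C t * X + C d : ℝ[X]) = (X - C a) * (X - C b) ↔ t = a + b ∧ d = a * b := by
  have key : (X - C a) * (X - C b) = X^2 - C (a+b) * X + C (a*b) := by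
    rw [C_add, C_mul]; ring
  rw [key]
  constructor
  · intro h
    have h1 := congrArg (fun p => p.coeff 1) h
    have h0 := congrArg (fun p => p.coeff 0) h
    simp only [coeff_add, coeff_sub, coeff_C_mul, coeff_X_pow, coeff_C, coeff_X_one] at h1 h0
    norm_num at h1 h0
    exact ⟨by linarith, by linarith⟩
  · rintro ⟨rfl, rfl⟩; rfl

lemma rot_transpose' (c s : ℝ) :
    (!![c, -s; s, c] : Matrix (Fin 2) (Fin 2) ℝ)ᵀ = !![c, s; -s, c] := by
  rw [Matrix.eta_fin_two (!![c, -s; s, c]ᵀ)]; simp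

lemma rot_orth' (c s : ℝ) (h : c^2 + s^2 = 1) :
    (!![c, -s; s, c] : Matrix (Fin 2) (Fin 2) ℝ)ᵀ * !![c, -s; s, c] = 1 := by
  rw [rot_transpose', Matrix.mul_fin_two, Matrix.one_fin_two]
  ext i j; fin_cases i <;> fin_cases j <;> simp <;> nlinarith [h]

lemma rot_det' (c s : ℝ) (h : c^2 + s^2 = 1) :
    (!![c, -s; s, c] : Matrix (Fin 2) (Fin 2) ℝ).det = 1 := by
  rw [Matrix.det_fin_two_of]; nlinarith [h]

lemma diag_two' (a b : ℝ) : Matrix.diagonal ![a, b] = !![a, 0; 0, b] := by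
  ext i j; fin_cases i <;> fin_cases j <;> simp [Matrix.diagonal]

lemma conj_rot' (c s a b : ℝ) :
    !![c, -s; s, c] * Matrix.diagonal ![a, b] * (!![c, -s; s, c] : Matrix (Fin 2) (Fin 2) ℝ)ᵀ =
    !![a*c^2 + b*s^2, (a-b)*c*s; (a-b)*c*s, a*s^2 + b*c^2] := by
  rw [rot_transpose', diag_two', Matrix.mul_fin_two, Matrix.mul_fin_two]
  ext i j; fin_cases i <;> fin_cases j <;> simp <;> ring

lemma combo_mat' (vp vm yp ym η c1 s1 c2 s2 : ℝ) :
    (1 - η) • (!![c1, -s1; s1, c1] * Matrix.diagonal ![vp, vm] *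
        (!![c1, -s1; s1, c1] : Matrix (Fin 2) (Fin 2) ℝ)ᵀ) +
      η • (!![c2, -s2; s2, c2] * Matrix.diagonal ![yp, ym] *
        (!![c2, -s2; s2, c2] : Matrix (Fin 2) (Fin 2) ℝ)ᵀ) =
    !![(1-η)*(vp*c1^2+vm*s1^2) + η*(yp*c2^2+ym*s2^2),
       (1-η)*(vp-vm)*c1*s1 + η*(yp-ym)*c2*s2;
       (1-η)*(vp-vm)*c1*s1 + η*(yp-ym)*c2*s2,
       (1-η)*(vp*s1^2+vm*c1^2) + η*(yp*s2^2+ym*c2^2)] := by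
  rw [conj_rot', conj_rot']
  ext i j; fin_cases i <;> fin_cases j <;>
    simp [Matrix.smul_apply, Matrix.add_apply] <;> ring

lemma norm_sq_aux' (c s x w : ℝ) (h : c^2 + s^2 = 1) (hx : x = c^2 - s^2)
    (hw : w = 2*c*s) : x^2 + w^2 = 1 := by
  subst hx hw; linear_combination (c^2 + s^2 + 1) * h

lemma cs_bounds' (x1 w1 x2 w2 : ℝ) (h1 : x1^2 + w1^2 = 1) (h2 : x2^2 + w2^2 = 1) :
    -1 ≤ x1*x2 + w1*w2 ∧ x1*x2 + w1*w2 ≤ 1 := by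
  constructor
  · nlinarith [sq_nonneg (x1+x2), sq_nonneg (w1+w2)]
  · nlinarith [sq_nonneg (x1-x2), sq_nonneg (w1-w2)]

lemma gap_bounds' (P Q g u : ℝ) (hP : 0 ≤ P) (hQ : 0 ≤ Q) (hg : 0 ≤ g)
    (hu1 : -1 ≤ u) (hu2 : u ≤ 1) (hg2 : g^2 = P^2 + Q^2 + 2*P*Q*u) :
    g ≤ P + Q ∧ P - Q ≤ g ∧ Q - P ≤ g := by
  have hPQ : 0 ≤ P*Q := mul_nonneg hP hQ
  have hub : g^2 ≤ (P+Q)^2 := by nlinarith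
  have hlb : (P-Q)^2 ≤ g^2 := by nlinarith
  refine ⟨?_, ?_, ?_⟩
  · nlinarith [sq_nonneg (P+Q-g)]
  · nlinarith [sq_nonneg (P-Q-g)]
  · nlinarith [sq_nonneg (Q-P-g)]

lemma core_fwd' (vp vm yp ym vp' vm' η c1 s1 c2 s2 : ℝ)
    (hv : vm ≤ vp) (hy : ym ≤ yp) (hv' : vm' ≤ vp') (hη0 : 0 ≤ η) (hη1 : η ≤ 1)
    (h1 : c1^2 + s1^2 = 1) (h2 : c2^2 + s2^2 = 1)
    (htr : vp' + vm' = (1-η)*(vp+vm) + η*(yp+ym))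
    (hdet : vp' * vm' =
      ((1-η)*(vp*c1^2+vm*s1^2) + η*(yp*c2^2+ym*s2^2)) *
      ((1-η)*(vp*s1^2+vm*c1^2) + η*(yp*s2^2+ym*c2^2)) -
      ((1-η)*(vp-vm)*c1*s1 + η*(yp-ym)*c2*s2)^2) :
    vp' ≤ (1-η)*vp + η*yp ∧ vm' ≤ (1-η)*vp + η*ym ∧ vm' ≤ (1-η)*vm + η*yp := by
  have hn1 := norm_sq_aux' c1 s1 _ _ h1 rfl rfl
  have hn2 := norm_sq_aux' c2 s2 _ _ h2 rfl rfl
  have hg2 : (vp'-vm')^2 = ((1-η)*(vp-vm))^2 + (η*(yp-ym))^2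
      + 2*((1-η)*(vp-vm))*(η*(yp-ym))
        *((c1^2-s1^2)*(c2^2-s2^2) + (2*c1*s1)*(2*c2*s2)) := by
    linear_combination (vp'+vm'+((1-η)*(vp+vm) + η*(yp+ym))) * htr
      - 4*hdet
      + ((1-η)*(vp-vm))^2*(c1^2+s1^2+1)*h1
      + (η*(yp-ym))^2*(c2^2+s2^2+1)*h2
      - (((1-η)*(vp+vm) + η*(yp+ym))
         + ((1-η)*(vp*c1^2+vm*s1^2) + η*(yp*c2^2+ym*s2^2))
         + ((1-η)*(vp*s1^2+vm*c1^2) + η*(yp*s2^2+ym*c2^2)))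
        *((1-η)*(vp+vm)*h1 + η*(yp+ym)*h2)
  have hP : 0 ≤ (1-η)*(vp-vm) := by apply mul_nonneg <;> linarith
  have hQ : 0 ≤ η*(yp-ym) := by apply mul_nonneg <;> linarith
  obtain ⟨hu1, hu2⟩ := cs_bounds' _ _ _ _ hn1 hn2
  obtain ⟨b1, b2, b3⟩ := gap_bounds' ((1-η)*(vp-vm)) (η*(yp-ym)) (vp'-vm') _
    hP hQ (by linarith) hu1 hu2 hg2
  ring_nf at b1 b2 b3 htr ⊢
  refine ⟨by linarith, by linarith, by linarith⟩

lemma exists_u' (P Q g : ℝ) (hP : 0 ≤ P) (hQ : 0 ≤ Q) (hg0 : 0 ≤ g)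
    (h1 : g ≤ P+Q) (h2 : P-Q ≤ g) (h3 : Q-P ≤ g) :
    ∃ u : ℝ, -1 ≤ u ∧ u ≤ 1 ∧ g^2 = P^2+Q^2+2*P*Q*u := by
  by_cases h : P*Q = 0
  · refine ⟨1, by norm_num, le_refl 1, ?_⟩
    rcases mul_eq_zero.mp h with h0 | h0
    · have hgQ : g = Q := le_antisymm (by linarith) (by linarith)
      rw [h0, hgQ]; ring
    · have hgP : g = P := le_antisymm (by linarith) (by linarith)
      rw [h0, hgP]; ring
  · obtain ⟨hPne, hQne⟩ := mul_ne_zero_iff.mp h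
    have hP' : 0 < P := lt_of_le_of_ne hP (Ne.symm hPne)
    have hQ' : 0 < Q := lt_of_le_of_ne hQ (Ne.symm hQne)
    refine ⟨(g^2-P^2-Q^2)/(2*P*Q), ?_, ?_, by field_simp; ring⟩
    · rw [le_div_iff₀ (by positivity)]; nlinarith
    · rw [div_le_one (by positivity)]; nlinarith

lemma core_bwd' (vp vm yp ym vp' vm' η : ℝ)
    (hv : vm ≤ vp) (hy : ym ≤ yp) (hv' : vm' ≤ vp') (hη0 : 0 ≤ η) (hη1 : η ≤ 1)
    (htr : vp' + vm' = (1-η)*(vp+vm) + η*(yp+ym))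
    (i1 : vp' ≤ (1-η)*vp + η*yp) (i2 : vm' ≤ (1-η)*vp + η*ym)
    (i3 : vm' ≤ (1-η)*vm + η*yp) :
    ∃ c2 s2 : ℝ, c2^2 + s2^2 = 1 ∧
      vp' * vm' = ((1-η)*vp + η*(yp*c2^2+ym*s2^2)) * ((1-η)*vm + η*(yp*s2^2+ym*c2^2))
        - (η*(yp-ym)*c2*s2)^2 := by
  have hP : 0 ≤ (1-η)*(vp-vm) := by apply mul_nonneg <;> linarith
  have hQ : 0 ≤ η*(yp-ym) := by apply mul_nonneg <;> linarith
  obtain ⟨u, hu1, hu2, hgu⟩ := exists_u' ((1-η)*(vp-vm)) (η*(yp-ym)) (vp'-vm')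
    hP hQ (by linarith) (by linarith) (by linarith) (by linarith)
  refine ⟨Real.sqrt ((1+u)/2), Real.sqrt ((1-u)/2), ?_, ?_⟩
  · rw [Real.sq_sqrt (by linarith), Real.sq_sqrt (by linarith)]; ring
  · have hc2 : (Real.sqrt ((1+u)/2))^2 = (1+u)/2 := Real.sq_sqrt (by linarith)
    have hs2 : (Real.sqrt ((1-u)/2))^2 = (1-u)/2 := Real.sq_sqrt (by linarith)
    set c2 := Real.sqrt ((1+u)/2)
    set s2 := Real.sqrt ((1-u)/2)
    linear_combination ((vp'+vm'+((1-η)*(vp+vm)+η*(yp+ym)))/4)*htr - (1/4)*hgu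
      - (η*yp*((1-η)*vm + η*(yp*s2^2+ym*c2^2))
         + η*ym*((1-η)*vp + η*(yp*(1+u)/2+ym*(1-u)/2))
         - η^2*(yp-ym)^2*s2^2)*hc2
      - (η*ym*((1-η)*vm + η*(yp*s2^2+ym*c2^2))
         + η*yp*((1-η)*vp + η*(yp*(1+u)/2+ym*(1-u)/2))
         - η^2*(yp-ym)^2*((1+u)/2))*hs2


lemma ent00 (a b c d : ℝ) : (!![a,b;c,d] : Matrix (Fin 2) (Fin 2) ℝ) 0 0 = a := rfl
lemma ent01 (a b c d : ℝ) : (!![a,b;c,d] : Matrix (Fin 2) (Fin 2) ℝ) 0 1 = b := rfl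
lemma ent10 (a b c d : ℝ) : (!![a,b;c,d] : Matrix (Fin 2) (Fin 2) ℝ) 1 0 = c := rfl
lemma ent11 (a b c d : ℝ) : (!![a,b;c,d] : Matrix (Fin 2) (Fin 2) ℝ) 1 1 = d := rfl

/-- eigenvalues of a convex combination of two rotated diagonal `2 × 2`
real symmetric matrices: the spectrum `(v'₊, v'₋)` is achievable by some rotations
`R_S, R_A ∈ SO(2)` iff the trace identity and the three Weyl-type inequalities hold. -/
theorem two_dim_spectrum_of_sum (vp vm yp ym vp' vm' η : ℝ)
    (hv : vm ≤ vp) (hy : ym ≤ yp) (hv' : vm' ≤ vp')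
    (hη0 : 0 ≤ η) (hη1 : η ≤ 1) :
    (∃ RS RA : Matrix (Fin 2) (Fin 2) ℝ,
        RSᵀ * RS = 1 ∧ RS.det = 1 ∧ RAᵀ * RA = 1 ∧ RA.det = 1 ∧
        ((1 - η) • (RS * Matrix.diagonal ![vp, vm] * RSᵀ) +
            η • (RA * Matrix.diagonal ![yp, ym] * RAᵀ)).charpoly =
          (X - C vp') * (X - C vm')) ↔
      (vp' + vm' = (1 - η) * (vp + vm) + η * (yp + ym) ∧
       vp' ≤ (1 - η) * vp + η * yp ∧
       vm' ≤ (1 - η) * vp + η * ym ∧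
       vm' ≤ (1 - η) * vm + η * yp) := by
  constructor
  · rintro ⟨RS, RA, hOS, hdS, hOA, hdA, hcp⟩
    have eS00 : RS 0 0 * RS 0 0 + RS 1 0 * RS 1 0 = 1 := by
      have := congrFun (congrFun hOS 0) 0
      simpa [Matrix.mul_apply, Fin.sum_univ_two, Matrix.one_apply,
        Matrix.transpose_apply] using this
    have eS01 : RS 0 0 * RS 0 1 + RS 1 0 * RS 1 1 = 0 := by
      have := congrFun (congrFun hOS 0) 1
      simpa [Matrix.mul_apply, Fin.sum_univ_two, Matrix.one_apply,
        Matrix.transpose_apply] using this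
    have edS : RS 0 0 * RS 1 1 - RS 0 1 * RS 1 0 = 1 := by
      rw [Matrix.det_fin_two] at hdS; exact hdS
    have hS11 : RS 1 1 = RS 0 0 := by
      linear_combination (RS 0 0)*edS + (RS 1 0)*eS01 - (RS 1 1)*eS00
    have hS01 : RS 0 1 = -(RS 1 0) := by
      linear_combination (RS 0 0)*eS01 - (RS 1 0)*edS - (RS 0 1)*eS00
    have eA00 : RA 0 0 * RA 0 0 + RA 1 0 * RA 1 0 = 1 := by
      have := congrFun (congrFun hOA 0) 0
      simpa [Matrix.mul_apply, Fin.sum_univ_two, Matrix.one_apply,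
        Matrix.transpose_apply] using this
    have eA01 : RA 0 0 * RA 0 1 + RA 1 0 * RA 1 1 = 0 := by
      have := congrFun (congrFun hOA 0) 1
      simpa [Matrix.mul_apply, Fin.sum_univ_two, Matrix.one_apply,
        Matrix.transpose_apply] using this
    have edA : RA 0 0 * RA 1 1 - RA 0 1 * RA 1 0 = 1 := by
      rw [Matrix.det_fin_two] at hdA; exact hdA
    have hA11 : RA 1 1 = RA 0 0 := by
      linear_combination (RA 0 0)*edA + (RA 1 0)*eA01 - (RA 1 1)*eA00
    have hA01 : RA 0 1 = -(RA 1 0) := by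
      linear_combination (RA 0 0)*eA01 - (RA 1 0)*edA - (RA 0 1)*eA00
    have hRSeq : RS = !![RS 0 0, -(RS 1 0); RS 1 0, RS 0 0] := by
      conv_lhs => rw [Matrix.eta_fin_two RS]
      rw [hS11, hS01]
    have hRAeq : RA = !![RA 0 0, -(RA 1 0); RA 1 0, RA 0 0] := by
      conv_lhs => rw [Matrix.eta_fin_two RA]
      rw [hA11, hA01]
    rw [hRSeq, hRAeq, combo_mat', charpoly_two', ent00, ent01, ent10, ent11,
      quad_eq_iff'] at hcp
    obtain ⟨ht, hd⟩ := hcp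
    have h1 : (RS 0 0)^2 + (RS 1 0)^2 = 1 := by linear_combination eS00
    have h2 : (RA 0 0)^2 + (RA 1 0)^2 = 1 := by linear_combination eA00
    have htr : vp' + vm' = (1-η)*(vp+vm) + η*(yp+ym) := by
      linear_combination -ht + (1-η)*(vp+vm)*h1 + η*(yp+ym)*h2
    have hdet : vp' * vm' =
        ((1-η)*(vp*(RS 0 0)^2+vm*(RS 1 0)^2) + η*(yp*(RA 0 0)^2+ym*(RA 1 0)^2)) *
        ((1-η)*(vp*(RS 1 0)^2+vm*(RS 0 0)^2) + η*(yp*(RA 1 0)^2+ym*(RA 0 0)^2)) -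
        ((1-η)*(vp-vm)*(RS 0 0)*(RS 1 0) + η*(yp-ym)*(RA 0 0)*(RA 1 0))^2 := by
      linear_combination -hd
    obtain ⟨j1, j2, j3⟩ := core_fwd' vp vm yp ym vp' vm' η (RS 0 0) (RS 1 0)
      (RA 0 0) (RA 1 0) hv hy hv' hη0 hη1 h1 h2 htr hdet
    exact ⟨htr, j1, j2, j3⟩
  · rintro ⟨htr, i1, i2, i3⟩
    obtain ⟨c2, s2, h2, hdet⟩ := core_bwd' vp vm yp ym vp' vm' η
      hv hy hv' hη0 hη1 htr i1 i2 i3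
    refine ⟨!![1, -0; 0, 1], !![c2, -s2; s2, c2],
      rot_orth' 1 0 (by norm_num), rot_det' 1 0 (by norm_num),
      rot_orth' c2 s2 h2, rot_det' c2 s2 h2, ?_⟩
    rw [combo_mat', charpoly_two', ent00, ent01, ent10, ent11, quad_eq_iff']
    constructor
    · linear_combination η*(yp+ym)*h2 - htr
    · linear_combination -hdet
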